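/- Let α < 0 and β < 0 be real numbers and let m ≥ 1 be an integer. If ⌊α⌊βx⌋⌋ ≥ ⌊β⌊αx⌋⌋ holds for all real x, then ⌊(α/m)⌊(β/m)x⌋⌋ ≥ ⌊(β/m)⌊(α/m)x⌋⌋ holds for all real x. -/
import Mathlib

lemma my_floor_div_int (a : ℝ) (m : ℤ) (hm : 0 < m) : ⌊a / (m : ℝ)⌋ = ⌊a⌋ / m := by
  have hm0 : (0:ℝ) < (m:ℝ) := by exact_mod_cast hm
  apply le_antisymm
  · rw [Int.le_ediv_iff_mul_le hm, Int.le_floor]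
    push_cast
    calc (⌊a / (m:ℝ)⌋ : ℝ) * m ≤ (a / m) * m := by
          gcongr; exact Int.floor_le _
      _ = a := by field_simp
  · rw [Int.le_floor, le_div_iff₀ hm0]
    calc ((⌊a⌋ / m : ℤ) : ℝ) * (m:ℝ) = ((⌊a⌋ / m * m : ℤ) : ℝ) := by push_cast; ring
      _ ≤ (⌊a⌋ : ℝ) := by exact_mod_cast Int.ediv_mul_le ⌊a⌋ hm.ne'
      _ ≤ a := Int.floor_le a

theorem symmetry_div_both (α β : ℝ) (hα : α < 0) (hβ : β < 0) (m : ℤ) (hm : 1 ≤ m)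
    (h : ∀ x : ℝ, ⌊α * (⌊β * x⌋ : ℝ)⌋ ≥ ⌊β * (⌊α * x⌋ : ℝ)⌋) :
    ∀ x : ℝ, ⌊(α / (m : ℝ)) * (⌊(β / (m : ℝ)) * x⌋ : ℝ)⌋ ≥
      ⌊(β / (m : ℝ)) * (⌊(α / (m : ℝ)) * x⌋ : ℝ)⌋ := by
  intro x
  have hm0 : (0:ℤ) < m := hm
  have hb : (β / m) * x = β * (x / m) := by ring
  have ha : (α / m) * x = α * (x / m) := by ring
  rw [hb, ha]
  have e1 : (α / m) * (⌊β * (x / m)⌋ : ℝ) = (α * (⌊β * (x/m)⌋ : ℝ)) / m := by ring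
  have e2 : (β / m) * (⌊α * (x / m)⌋ : ℝ) = (β * (⌊α * (x/m)⌋ : ℝ)) / m := by ring
  rw [e1, e2, my_floor_div_int _ _ hm0, my_floor_div_int _ _ hm0]
  exact Int.ediv_le_ediv hm0 (h (x / m))
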